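/- Fix 0 < δ < 1. For primes p₁, p₂ ≤ t, one has ∑_{p₁,p₂ ≤ t} rad(p₁−1)^{1-δ} rad(p₂−1)^{1-δ} rad(gcd(p₁−1, p₂−1))^{δ} (p₁ p₂)^{δ−1} ≤ ∑_{a ≤ t} a^δ π(t,a,1)², where π(t,a,1) is the number of primes p ≤ t with p ≡ 1 mod a. -/

import Mathlib

/-- `rad n` : the radical of `n`, the product of the distinct primes dividing `n`. -/
def rad (n : ℕ) : ℕ := ∏ p ∈ n.primeFactors, p

/-- `piArith t a` = number of primes `p ≤ t` with `p ≡ 1 (mod a)`. -/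
noncomputable def piArith (t : ℝ) (a : ℕ) : ℕ :=
  ((Finset.range (⌊t⌋₊ + 1)).filter (fun p => p.Prime ∧ a ∣ (p - 1))).card

lemma rad_pos (n : ℕ) : 0 < rad n :=
  Finset.prod_pos fun p hp => (Nat.prime_of_mem_primeFactors hp).pos

lemma rad_dvd (n : ℕ) : rad n ∣ n := Nat.prod_primeFactors_dvd n

lemma key_le_one (δ : ℝ) (h1 : δ < 1) (p : ℕ) (hp : p.Prime) :
    (rad (p - 1) : ℝ) ^ (1 - δ) * (p : ℝ) ^ (δ - 1) ≤ 1 := by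
  have hp1 : 1 ≤ p - 1 := Nat.le_sub_one_of_lt hp.one_lt
  have hr : (rad (p - 1) : ℝ) ≤ (p : ℝ) := by
    have := Nat.le_of_dvd (by omega) (rad_dvd (p - 1))
    exact_mod_cast this.trans (Nat.sub_le p 1)
  have hppos : (0 : ℝ) < p := by exact_mod_cast hp.pos
  have h2 : (rad (p - 1) : ℝ) ^ (1 - δ) ≤ (p : ℝ) ^ (1 - δ) :=
    Real.rpow_le_rpow (by positivity) hr (by linarith)
  calc (rad (p - 1) : ℝ) ^ (1 - δ) * (p : ℝ) ^ (δ - 1)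
      ≤ (p : ℝ) ^ (1 - δ) * (p : ℝ) ^ (δ - 1) := by
        exact mul_le_mul_of_nonneg_right h2 (Real.rpow_nonneg hppos.le _)
    _ = 1 := by
        rw [← Real.rpow_add hppos]
        norm_num

theorem stmt17 (δ : ℝ) (h0 : 0 < δ) (h1 : δ < 1) (t : ℝ) :
    ∑ p₁ ∈ (Finset.range (⌊t⌋₊ + 1)).filter Nat.Prime,
      ∑ p₂ ∈ (Finset.range (⌊t⌋₊ + 1)).filter Nat.Prime,
        (rad (p₁ - 1) : ℝ) ^ (1 - δ) * (rad (p₂ - 1) : ℝ) ^ (1 - δ)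
          * (rad (Nat.gcd (p₁ - 1) (p₂ - 1)) : ℝ) ^ δ
          * ((p₁ : ℝ) * (p₂ : ℝ)) ^ (δ - 1)
      ≤ ∑ a ∈ Finset.Icc 1 ⌊t⌋₊, (a : ℝ) ^ δ * (piArith t a : ℝ) ^ 2 := by
  set N := ⌊t⌋₊ with hN
  set P : Finset ℕ := (Finset.range (N + 1)).filter Nat.Prime with hP
  set g : ℕ × ℕ → ℕ := fun x => rad (Nat.gcd (x.1 - 1) (x.2 - 1)) with hg
  -- Step 1: pointwise bound by (rad gcd)^δ
  have step1 :
      ∑ p₁ ∈ P, ∑ p₂ ∈ P,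
        (rad (p₁ - 1) : ℝ) ^ (1 - δ) * (rad (p₂ - 1) : ℝ) ^ (1 - δ)
          * (rad (Nat.gcd (p₁ - 1) (p₂ - 1)) : ℝ) ^ δ
          * ((p₁ : ℝ) * (p₂ : ℝ)) ^ (δ - 1)
      ≤ ∑ x ∈ P ×ˢ P, (g x : ℝ) ^ δ := by
    rw [Finset.sum_product]
    refine Finset.sum_le_sum fun p₁ hp₁ => Finset.sum_le_sum fun p₂ hp₂ => ?_
    have hq₁ : p₁.Prime := (Finset.mem_filter.mp hp₁).2
    have hq₂ : p₂.Prime := (Finset.mem_filter.mp hp₂).2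
    have hpos1 : (0:ℝ) < p₁ := by exact_mod_cast hq₁.pos
    have hpos2 : (0:ℝ) < p₂ := by exact_mod_cast hq₂.pos
    have hmul : ((p₁ : ℝ) * (p₂ : ℝ)) ^ (δ - 1)
        = (p₁ : ℝ) ^ (δ - 1) * (p₂ : ℝ) ^ (δ - 1) :=
      Real.mul_rpow hpos1.le hpos2.le
    rw [hmul]
    have hgd : (0:ℝ) ≤ (rad (Nat.gcd (p₁ - 1) (p₂ - 1)) : ℝ) ^ δ :=
      Real.rpow_nonneg (by positivity) _
    calc (rad (p₁ - 1) : ℝ) ^ (1 - δ) * (rad (p₂ - 1) : ℝ) ^ (1 - δ)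
          * (rad (Nat.gcd (p₁ - 1) (p₂ - 1)) : ℝ) ^ δ
          * ((p₁:ℝ) ^ (δ - 1) * (p₂:ℝ) ^ (δ - 1))
        = ((rad (p₁ - 1) : ℝ) ^ (1 - δ) * (p₁:ℝ) ^ (δ - 1))
          * ((rad (p₂ - 1) : ℝ) ^ (1 - δ) * (p₂:ℝ) ^ (δ - 1))
          * (rad (Nat.gcd (p₁ - 1) (p₂ - 1)) : ℝ) ^ δ := by ring
      _ ≤ 1 * 1 * (rad (Nat.gcd (p₁ - 1) (p₂ - 1)) : ℝ) ^ δ := by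
          refine mul_le_mul_of_nonneg_right ?_ hgd
          have a1 := key_le_one δ h1 p₁ hq₁
          have a2 := key_le_one δ h1 p₂ hq₂
          have n1 : (0:ℝ) ≤ (rad (p₁ - 1) : ℝ) ^ (1 - δ) * (p₁:ℝ) ^ (δ - 1) := by positivity
          have n2 : (0:ℝ) ≤ (rad (p₂ - 1) : ℝ) ^ (1 - δ) * (p₂:ℝ) ^ (δ - 1) := by positivity
          exact mul_le_mul a1 a2 n2 zero_le_one
      _ = (g (p₁, p₂) : ℝ) ^ δ := by rw [one_mul, one_mul]
  refine step1.trans ?_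
  -- Step 2: fiberwise
  have maps : ∀ x ∈ P ×ˢ P, g x ∈ Finset.Icc 1 N := by
    rintro ⟨p₁, p₂⟩ hx
    rw [Finset.mem_product] at hx
    have hq₁ : p₁.Prime := (Finset.mem_filter.mp hx.1).2
    have hle : p₁ < N + 1 := Finset.mem_range.mp (Finset.mem_filter.mp hx.1).1
    have hgcd : g (p₁, p₂) ∣ p₁ - 1 :=
      (rad_dvd _).trans (Nat.gcd_dvd_left _ _)
    have h2 : 2 ≤ p₁ := hq₁.two_le
    have hle2 : g (p₁, p₂) ≤ p₁ - 1 := Nat.le_of_dvd (by omega) hgcd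
    refine Finset.mem_Icc.mpr ⟨rad_pos _, by omega⟩
  rw [← Finset.sum_fiberwise_of_maps_to maps (fun x => (g x : ℝ) ^ δ)]
  refine Finset.sum_le_sum fun a ha => ?_
  have ha1 : 1 ≤ a := (Finset.mem_Icc.mp ha).1
  -- inner sum over fiber
  have hfib : ∀ x ∈ (P ×ˢ P).filter (fun x => g x = a), (g x : ℝ) ^ δ = (a:ℝ) ^ δ := by
    intro x hx
    rw [(Finset.mem_filter.mp hx).2]
  rw [Finset.sum_congr rfl hfib, Finset.sum_const, nsmul_eq_mul, mul_comm]
  refine mul_le_mul_of_nonneg_left ?_ (Real.rpow_nonneg (by positivity) _)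
  -- card bound
  have hsub : (P ×ˢ P).filter (fun x => g x = a)
      ⊆ ((Finset.range (N + 1)).filter (fun p => p.Prime ∧ a ∣ (p - 1))) ×ˢ
        ((Finset.range (N + 1)).filter (fun p => p.Prime ∧ a ∣ (p - 1))) := by
    rintro ⟨p₁, p₂⟩ hx
    rw [Finset.mem_filter, Finset.mem_product] at hx
    obtain ⟨⟨h₁, h₂⟩, hga⟩ := hx
    rw [Finset.mem_filter] at h₁ h₂
    have d1 : a ∣ p₁ - 1 := hga ▸ (rad_dvd _).trans (Nat.gcd_dvd_left _ _)
    have d2 : a ∣ p₂ - 1 := hga ▸ (rad_dvd _).trans (Nat.gcd_dvd_right _ _)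
    exact Finset.mem_product.mpr ⟨Finset.mem_filter.mpr ⟨h₁.1, h₁.2, d1⟩,
      Finset.mem_filter.mpr ⟨h₂.1, h₂.2, d2⟩⟩
  have hcard := Finset.card_le_card hsub
  rw [Finset.card_product] at hcard
  have : (piArith t a : ℝ) ^ 2 = ((piArith t a * piArith t a : ℕ) : ℝ) := by
    push_cast; ring
  rw [this]
  exact_mod_cast hcard
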